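/- Let k be a positive integer, let g1, g2 each be either a linear defining function g(x, θ) = ⟨x, θ⟩ with θ in the unit sphere or a circular defining function g(x, θ) = ‖x − rθ‖₂ with radius r > 0 and θ in the unit sphere, and let ψ = (ψ1, ψ2) ∈ S^1. Then for any Borel probability measure μ on ℝ^{d1} × ℝ^{d2}, the k-th absolute moment of the pushforward of μ under T_{θ1,θ2,ψ}(x1, x2) = ψ1 g1(x1, θ1) + ψ2 g2(x2, θ2) satisfies ∫_ℝ |t|^k d(T_{θ1,θ2,ψ}♯μ)(t) ≤ Σ_{i=0}^{k} k^i C_{g1,g2}^{k−i} M_i(μ), where M_i(μ) = ∫ (‖x1‖₁ + ‖x2‖₁)^i dμ(x1, x2) and C_{g1,g2} is the sum of the radii of the circular defining functions among g1, g2 (equal to 0 if both are linear). (Moment bound for HHRT pushforwards from the proof of Proposition 4.) -/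
import Mathlib


open MeasureTheory ENNReal
open scoped RealInnerProductSpace

noncomputable section

/-- `Euc d` is the Euclidean space `ℝ^d`. -/
abbrev Euc (d : ℕ) := EuclideanSpace ℝ (Fin d)

/-- The HHRT projection map `T_{θ1,θ2,ψ}(x1,x2) = ψ1 g1(x1,θ1) + ψ2 g2(x2,θ2)`. -/
def Tmap {d1 d2 : ℕ} {Ω1 Ω2 : Type*} (g1 : Euc d1 → Ω1 → ℝ) (g2 : Euc d2 → Ω2 → ℝ)
    (θ1 : Ω1) (θ2 : Ω2) (ψ : Metric.sphere (0 : Euc 2) 1) (z : Euc d1 × Euc d2) : ℝ :=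
  (ψ : Euc 2) 0 * g1 z.1 θ1 + (ψ : Euc 2) 1 * g2 z.2 θ2

/-- The ℓ¹ norm on `ℝ^d`. -/
def l1norm {d : ℕ} (x : Euc d) : ℝ := ∑ i, |x i|

lemma l1norm_nonneg {d : ℕ} (x : Euc d) : 0 ≤ l1norm x :=
  Finset.sum_nonneg fun _ _ => abs_nonneg _

lemma norm_le_l1norm {d : ℕ} (x : Euc d) : ‖x‖ ≤ l1norm x := by
  rw [EuclideanSpace.norm_eq]
  have h1 : ∑ i, ‖x i‖ ^ 2 ≤ (l1norm x) ^ 2 := by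
    simpa [l1norm, Real.norm_eq_abs] using
      Finset.sum_sq_le_sq_sum_of_nonneg (s := Finset.univ)
        (f := fun i => |x i|) (fun i _ => abs_nonneg _)
  calc Real.sqrt (∑ i, ‖x i‖ ^ 2) ≤ Real.sqrt ((l1norm x) ^ 2) := Real.sqrt_le_sqrt h1
    _ = l1norm x := Real.sqrt_sq (l1norm_nonneg x)

lemma abs_coord_le_norm {d : ℕ} (x : Euc d) (i : Fin d) : |x i| ≤ ‖x‖ := by
  rw [EuclideanSpace.norm_eq]
  have : |x i| ^ 2 ≤ ∑ j, ‖x j‖ ^ 2 := by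
    simpa [Real.norm_eq_abs] using
      Finset.single_le_sum (f := fun j => |x j| ^ 2) (fun j _ => sq_nonneg _) (Finset.mem_univ i)
  calc |x i| = Real.sqrt (|x i| ^ 2) := (Real.sqrt_sq (abs_nonneg _)).symm
    _ ≤ _ := Real.sqrt_le_sqrt this

lemma l1norm_continuous {d : ℕ} : Continuous (l1norm (d := d)) := by
  unfold l1norm
  exact continuous_finset_sum _ fun i _ => ((EuclideanSpace.proj i).continuous).abs

lemma g_bound {d : ℕ} (g : Euc d → Metric.sphere (0 : Euc d) 1 → ℝ) (r : ℝ)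
    (hg : (r = 0 ∧ ∀ x θ, g x θ = ⟪x, (θ : Euc d)⟫) ∨
      (0 < r ∧ ∀ x θ, g x θ = ‖x - r • (θ : Euc d)‖))
    (θ : Metric.sphere (0 : Euc d) 1) (x : Euc d) :
    |g x θ| ≤ l1norm x + r := by
  have hθ : ‖(θ : Euc d)‖ = 1 := by
    have := θ.2
    simpa [mem_sphere_zero_iff_norm] using this
  rcases hg with ⟨hr, hlin⟩ | ⟨hr, hcirc⟩
  · rw [hlin, hr, add_zero]
    calc |⟪x, (θ : Euc d)⟫| ≤ ‖x‖ * ‖(θ : Euc d)‖ := abs_real_inner_le_norm _ _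
      _ = ‖x‖ := by rw [hθ, mul_one]
      _ ≤ l1norm x := norm_le_l1norm x
  · rw [hcirc, abs_of_nonneg (norm_nonneg _)]
    calc ‖x - r • (θ : Euc d)‖ ≤ ‖x‖ + ‖r • (θ : Euc d)‖ := norm_sub_le _ _
      _ = ‖x‖ + r := by rw [norm_smul, hθ, Real.norm_eq_abs, abs_of_pos hr, mul_one]
      _ ≤ l1norm x + r := by linarith [norm_le_l1norm x]

/-- **Moment bound for HHRT pushforwards (from the proof of Proposition 4)**: for linear or
circular defining functions `g1, g2` (with radii `r1, r2`, a radius being `0` for a linear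
defining function) and any `ψ ∈ S^1`, the `k`-th absolute moment of the pushforward of a
Borel probability measure `μ` on `ℝ^{d1} × ℝ^{d2}` under `T_{θ1,θ2,ψ}` is at most
`Σ_{i=0}^k k^i C_{g1,g2}^{k−i} M_i(μ)`, where `M_i(μ) = ∫ (‖x1‖₁ + ‖x2‖₁)^i dμ` and
`C_{g1,g2} = r1 + r2`. -/
theorem hhrt_pushforward_moment_bound (d1 d2 : ℕ) (k : ℕ) (hk : 1 ≤ k)
    (g1 : Euc d1 → Metric.sphere (0 : Euc d1) 1 → ℝ)
    (g2 : Euc d2 → Metric.sphere (0 : Euc d2) 1 → ℝ) (r1 r2 : ℝ)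
    (hg1 : (r1 = 0 ∧ ∀ x θ, g1 x θ = ⟪x, (θ : Euc d1)⟫) ∨
      (0 < r1 ∧ ∀ x θ, g1 x θ = ‖x - r1 • (θ : Euc d1)‖))
    (hg2 : (r2 = 0 ∧ ∀ x θ, g2 x θ = ⟪x, (θ : Euc d2)⟫) ∨
      (0 < r2 ∧ ∀ x θ, g2 x θ = ‖x - r2 • (θ : Euc d2)‖))
    (θ1 : Metric.sphere (0 : Euc d1) 1) (θ2 : Metric.sphere (0 : Euc d2) 1)
    (ψ : Metric.sphere (0 : Euc 2) 1)
    (μ : Measure (Euc d1 × Euc d2)) [IsProbabilityMeasure μ] :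
    ∫⁻ t : ℝ, (ENNReal.ofReal |t|) ^ k ∂(μ.map (Tmap g1 g2 θ1 θ2 ψ))
      ≤ ∑ i ∈ Finset.range (k + 1),
          (k : ℝ≥0∞) ^ i * ENNReal.ofReal (r1 + r2) ^ (k - i) *
            ∫⁻ z : Euc d1 × Euc d2,
              (ENNReal.ofReal (l1norm z.1 + l1norm z.2)) ^ i ∂μ := by
  have hψ : ‖(ψ : Euc 2)‖ = 1 := by
    have := ψ.2; simpa [mem_sphere_zero_iff_norm] using this
  have hψ0 : |(ψ : Euc 2) 0| ≤ 1 := (abs_coord_le_norm _ 0).trans hψ.le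
  have hψ1 : |(ψ : Euc 2) 1| ≤ 1 := (abs_coord_le_norm _ 1).trans hψ.le
  -- continuity of g's in x
  have hg1c : Continuous fun x => g1 x θ1 := by
    rcases hg1 with ⟨_, h⟩ | ⟨_, h⟩
    · simp only [h]; exact continuous_id.inner continuous_const
    · simp only [h]; exact (continuous_id.sub continuous_const).norm
  have hg2c : Continuous fun x => g2 x θ2 := by
    rcases hg2 with ⟨_, h⟩ | ⟨_, h⟩
    · simp only [h]; exact continuous_id.inner continuous_const
    · simp only [h]; exact (continuous_id.sub continuous_const).norm
  have hTc : Continuous (Tmap g1 g2 θ1 θ2 ψ) := by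
    unfold Tmap
    exact (continuous_const.mul (hg1c.comp continuous_fst)).add
      (continuous_const.mul (hg2c.comp continuous_snd))
  have hr1 : 0 ≤ r1 := by
    rcases hg1 with ⟨h, _⟩ | ⟨h, _⟩
    · exact h.ge
    · exact h.le
  have hr2 : 0 ≤ r2 := by
    rcases hg2 with ⟨h, _⟩ | ⟨h, _⟩
    · exact h.ge
    · exact h.le
  -- pointwise bound
  set C : ℝ≥0∞ := ENNReal.ofReal (r1 + r2) with hC
  set L : Euc d1 × Euc d2 → ℝ≥0∞ := fun z => ENNReal.ofReal (l1norm z.1 + l1norm z.2) with hL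
  have hLm : Measurable L := by
    exact ((l1norm_continuous.comp continuous_fst).add
      (l1norm_continuous.comp continuous_snd)).measurable.ennreal_ofReal
  have hptwise : ∀ z, ENNReal.ofReal |Tmap g1 g2 θ1 θ2 ψ z| ≤ L z + C := by
    intro z
    have h1 : |g1 z.1 θ1| ≤ l1norm z.1 + r1 := g_bound g1 r1 hg1 θ1 z.1
    have h2 : |g2 z.2 θ2| ≤ l1norm z.2 + r2 := g_bound g2 r2 hg2 θ2 z.2
    have habs : |Tmap g1 g2 θ1 θ2 ψ z| ≤ (l1norm z.1 + l1norm z.2) + (r1 + r2) := by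
      unfold Tmap
      calc |(ψ : Euc 2) 0 * g1 z.1 θ1 + (ψ : Euc 2) 1 * g2 z.2 θ2|
          ≤ |(ψ : Euc 2) 0 * g1 z.1 θ1| + |(ψ : Euc 2) 1 * g2 z.2 θ2| := abs_add_le _ _
        _ = |(ψ : Euc 2) 0| * |g1 z.1 θ1| + |(ψ : Euc 2) 1| * |g2 z.2 θ2| := by
            rw [abs_mul, abs_mul]
        _ ≤ 1 * (l1norm z.1 + r1) + 1 * (l1norm z.2 + r2) := by
            have e1 : |g1 z.1 θ1| ≤ l1norm z.1 + r1 := h1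
            have e2 : |g2 z.2 θ2| ≤ l1norm z.2 + r2 := h2
            gcongr <;> first | exact abs_nonneg _ | assumption
        _ = (l1norm z.1 + l1norm z.2) + (r1 + r2) := by ring
    calc ENNReal.ofReal |Tmap g1 g2 θ1 θ2 ψ z|
        ≤ ENNReal.ofReal ((l1norm z.1 + l1norm z.2) + (r1 + r2)) := ENNReal.ofReal_le_ofReal habs
      _ = L z + C := ENNReal.ofReal_add (add_nonneg (l1norm_nonneg _) (l1norm_nonneg _)) (by positivity)
  rw [lintegral_map (measurable_abs.ennreal_ofReal.pow_const k) hTc.measurable]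
  calc ∫⁻ z, (ENNReal.ofReal |Tmap g1 g2 θ1 θ2 ψ z|) ^ k ∂μ
      ≤ ∫⁻ z, (L z + C) ^ k ∂μ := lintegral_mono fun z => pow_le_pow_left' (hptwise z) k
    _ = ∫⁻ z, ∑ i ∈ Finset.range (k + 1), L z ^ i * C ^ (k - i) * (k.choose i : ℝ≥0∞) ∂μ := by
        simp_rw [add_pow]
    _ ≤ ∫⁻ z, ∑ i ∈ Finset.range (k + 1), (k : ℝ≥0∞) ^ i * C ^ (k - i) * L z ^ i ∂μ := by
        refine lintegral_mono fun z => Finset.sum_le_sum fun i _ => ?_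
        have hch : (k.choose i : ℝ≥0∞) ≤ (k : ℝ≥0∞) ^ i := by
          rw [← Nat.cast_pow]; exact Nat.cast_le.mpr (Nat.choose_le_pow k i)
        calc L z ^ i * C ^ (k - i) * (k.choose i : ℝ≥0∞)
            ≤ L z ^ i * C ^ (k - i) * (k : ℝ≥0∞) ^ i := by gcongr
          _ = (k : ℝ≥0∞) ^ i * C ^ (k - i) * L z ^ i := by ring
    _ = ∑ i ∈ Finset.range (k + 1), ∫⁻ z, (k : ℝ≥0∞) ^ i * C ^ (k - i) * L z ^ i ∂μ := by
        exact lintegral_finset_sum _ fun i _ =>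
          (measurable_const.mul (hLm.pow_const i))
    _ = ∑ i ∈ Finset.range (k + 1), (k : ℝ≥0∞) ^ i * C ^ (k - i) * ∫⁻ z, L z ^ i ∂μ := by
        refine Finset.sum_congr rfl fun i _ => ?_
        exact lintegral_const_mul' _ _ (by
          exact ENNReal.mul_ne_top (pow_ne_top (natCast_ne_top k)) (pow_ne_top ofReal_ne_top))
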